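/- For every regularized wavelet set W, the map h̃_W is a measurable bijection of [0,1), and there exist a measurable partition {A_k}_{k∈ℤ} of [1/2,1) and a measurable partition {B_k}_{k∈ℤ} of [0,1/2) such that h̃_W(x) = frac(2^k x) for x ∈ A_k and h̃_W(x) = frac(2^k(x−1)) for x ∈ B_k, where frac(y) = y − ⌊y⌋ denotes the fractional part. -/

import Mathlib

open MeasureTheory Set Real Filter
open scoped symmDiff Classical

noncomputable section

/-- The Littlewood–Paley set `E = [-2π,-π) ∪ [π,2π)`. -/
def E : Set ℝ := Ico (-(2*π)) (-π) ∪ Ico π (2*π)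

/-- `tau x = x + 2jπ`, where `j` is the unique integer with `x + 2jπ ∈ E`. -/
def tau (x : ℝ) : ℝ :=
  if x - 2*π*(⌊x/(2*π)⌋ : ℝ) < π then x - 2*π*(⌊x/(2*π)⌋ : ℝ) - 2*π
  else x - 2*π*(⌊x/(2*π)⌋ : ℝ)

/-- `delta x = 2^k x`, where (for `x ≠ 0`) `k` is the unique integer with `2^k x ∈ E`. -/
def delta (x : ℝ) : ℝ :=
  if 0 < x then (2:ℝ)^(⌈Real.logb 2 (π/x)⌉) * x
  else (2:ℝ)^(⌊Real.logb 2 (2*π/(-x))⌋) * x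

/-- The map `ξ : E → [0,1)`. -/
def xiMap (x : ℝ) : ℝ := if x < 0 then x/(2*π) + 1 else x/(2*π)

/-- The inverse `ξ⁻¹ : [0,1) → E`. -/
def xiInv (y : ℝ) : ℝ := if y < 1/2 then 2*π*(y-1) else 2*π*y

/-- The translates `{W + 2kπ}_{k ∈ ℤ}` form a partition of `ℝ`. -/
def TransPartition (W : Set ℝ) : Prop :=
  (⋃ k : ℤ, (fun x : ℝ => x + 2*π*(k:ℝ)) '' W) = univ ∧
  Pairwise fun k l : ℤ =>
    Disjoint ((fun x : ℝ => x + 2*π*(k:ℝ)) '' W) ((fun x : ℝ => x + 2*π*(l:ℝ)) '' W)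

/-- The dilates `{2^k W}_{k ∈ ℤ}` form a partition of `ℝ \ {0}`. -/
def DilPartition (W : Set ℝ) : Prop :=
  (⋃ k : ℤ, (fun x : ℝ => (2:ℝ)^k * x) '' W) = {(0:ℝ)}ᶜ ∧
  Pairwise fun k l : ℤ =>
    Disjoint ((fun x : ℝ => (2:ℝ)^k * x) '' W) ((fun x : ℝ => (2:ℝ)^l * x) '' W)

/-- A regularized wavelet set. -/
def IsRegularizedWaveletSet (W : Set ℝ) : Prop :=
  MeasurableSet W ∧ TransPartition W ∧ DilPartition W

/-- The wavelet induced isomorphism `h̃_W = ξ ∘ τ|_W ∘ (δ|_W)⁻¹ ∘ ξ⁻¹` of `[0,1)`. -/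
def hIso (W : Set ℝ) : ℝ → ℝ :=
  fun t => xiMap (tau (Function.invFunOn delta W (xiInv t)))

/-- The class of wavelet induced maps of `[0,1)` (Proposition 2.3 (i)-(ii)). -/
def IsWaveletInduced (h : ℝ → ℝ) : Prop :=
  Set.BijOn h (Ico (0:ℝ) 1) (Ico (0:ℝ) 1) ∧
  Measurable ((Ico (0:ℝ) 1).restrict h) ∧
  ∃ A B : ℤ → Set ℝ,
    (∀ k, MeasurableSet (A k)) ∧ (∀ k, MeasurableSet (B k)) ∧
    (⋃ k, A k) = Ico (1/2 : ℝ) 1 ∧ Pairwise (Function.onFun Disjoint A) ∧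
    (⋃ k, B k) = Ico (0:ℝ) (1/2) ∧ Pairwise (Function.onFun Disjoint B) ∧
    (∀ k, ∀ x ∈ A k, h x = Int.fract ((2:ℝ)^k * x)) ∧
    (∀ k, ∀ x ∈ B k, h x = Int.fract ((2:ℝ)^k * (x - 1)))

/-- The class `WI₁`. -/
def MemWI1 (f : ℝ → ℝ) : Prop :=
  ∃ A B : ℕ → Set ℝ,
    (∀ k, MeasurableSet (A k)) ∧ (∀ k, MeasurableSet (B k)) ∧
    (⋃ k, A k) = Ico (1/2 : ℝ) 1 ∧ Pairwise (Function.onFun Disjoint A) ∧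
    (⋃ k, B k) = Ico (0:ℝ) (1/2) ∧ Pairwise (Function.onFun Disjoint B) ∧
    (∀ k, ∀ x ∈ A k, f x = x / 2^(k+1)) ∧
    (∀ k, ∀ x ∈ B k, f x = (x - 1) / 2^(k+1) + 1)

/-- The class `WI₂`. -/
def MemWI2 (g : ℝ → ℝ) : Prop :=
  Measurable ((Ico (0:ℝ) 1).restrict g) ∧
  Set.MapsTo g (Ico (0:ℝ) 1) (Ico (0:ℝ) 1) ∧
  Set.InjOn g (Ico (0:ℝ) 1) ∧
  ∀ x ∈ Ico (0:ℝ) 1, ∃ k l : ℕ, g x = (x + l) / 2^k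

/-- The Schröder–Cantor–Bernstein map `u ⋄ v` for injections between arbitrary types. -/
def scb {α β : Type*} (u : α → β) (v : β → α) : α → β :=
  fun x =>
    if x ∈ ⋃ k : ℕ, (v ∘ u)^[k] '' (Set.range v)ᶜ then u x
    else if h2 : x ∈ Set.range v then Classical.choose h2
    else u x

/-- The Schröder–Cantor–Bernstein map `u ⋄ v` for maps of `[0,1)`. -/
def scbOn (u v : ℝ → ℝ) : ℝ → ℝ :=
  fun x =>
    if x ∈ ⋃ k : ℕ, (v ∘ u)^[k] '' (Ico (0:ℝ) 1 \ v '' (Ico (0:ℝ) 1)) then u x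
    else Function.invFunOn v (Ico (0:ℝ) 1) x

/-- The metric `d` on wavelet sets. -/
def dws (W₁ W₂ : Set ℝ) : ℝ :=
  Real.sqrt (volume (W₁ ∆ W₂)).toReal + Real.sqrt (∫ x in W₁ ∆ W₂, |x|⁻¹)

/-- The measure `ν` on `[0,1)` with density `(1-x)⁻¹` on `[0,1/2)` and `x⁻¹` on `[1/2,1)`. -/
def nuMeasure : Measure ℝ :=
  volume.withDensity (fun x =>
    ENNReal.ofReal (if x ∈ Ico (0:ℝ) (1/2) then (1-x)⁻¹
      else if x ∈ Ico (1/2:ℝ) 1 then x⁻¹ else 0))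


lemma E_ne_zero {x : ℝ} (hx : x ∈ E) : x ≠ 0 := by
  have hπ := pi_pos
  rintro rfl
  rcases hx with ⟨h1, h2⟩ | ⟨h1, h2⟩ <;> linarith

lemma delta_eq_zpow (x : ℝ) : ∃ k : ℤ, delta x = (2:ℝ)^k * x := by
  unfold delta; split <;> exact ⟨_, rfl⟩

lemma delta_mem_E {x : ℝ} (hx : x ≠ 0) : delta x ∈ E := by
  rcases lt_or_gt_of_ne hx.symm with h | h
  case inl =>
    rw [delta, if_pos h]
    right
    set k := ⌈Real.logb 2 (π/x)⌉ with hk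
    have h1 : Real.logb 2 (π/x) ≤ (k:ℝ) := Int.le_ceil _
    have h2 : (k:ℝ) < Real.logb 2 (π/x) + 1 := Int.ceil_lt_add_one _
    have hb : (2:ℝ) ^ (Real.logb 2 (π/x)) = π/x :=
      Real.rpow_logb two_pos (by norm_num) (div_pos pi_pos h)
    have e1 : π/x ≤ (2:ℝ)^k := by
      rw [← hb, ← Real.rpow_intCast]
      exact Real.rpow_le_rpow_left_iff one_lt_two |>.2 h1
    have e2 : (2:ℝ)^k < 2*(π/x) := by
      calc (2:ℝ)^k = (2:ℝ)^(k:ℝ) := (Real.rpow_intCast 2 k).symm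
        _ < (2:ℝ)^(Real.logb 2 (π/x) + 1) := Real.rpow_lt_rpow_left_iff one_lt_two |>.2 h2
        _ = 2*(π/x) := by rw [Real.rpow_add two_pos, hb, Real.rpow_one]; ring
    constructor
    · rw [div_le_iff₀ h] at e1; linarith
    · have e2' : (2:ℝ)^k < 2*π/x := by rw [mul_div_assoc]; linarith
      rw [lt_div_iff₀ h] at e2'
      linarith
  case inr =>
    rw [delta, if_neg (not_lt.2 h.le)]
    left
    have hxneg : x < 0 := h
    have hnx : 0 < -x := by linarith
    set k := ⌊Real.logb 2 (2*π/(-x))⌋ with hk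
    have h1 : (k:ℝ) ≤ Real.logb 2 (2*π/(-x)) := Int.floor_le _
    have h2 : Real.logb 2 (2*π/(-x)) < (k:ℝ) + 1 := Int.lt_floor_add_one _
    have hb : (2:ℝ) ^ (Real.logb 2 (2*π/(-x))) = 2*π/(-x) :=
      Real.rpow_logb two_pos (by norm_num) (div_pos (by positivity) hnx)
    have e1 : (2:ℝ)^k ≤ 2*π/(-x) := by
      rw [← hb, ← Real.rpow_intCast]
      exact Real.rpow_le_rpow_left_iff one_lt_two |>.2 h1
    have e2 : 2*π/(-x) < 2*(2:ℝ)^k := by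
      calc 2*π/(-x) = (2:ℝ)^(Real.logb 2 (2*π/(-x))) := hb.symm
        _ < (2:ℝ)^((k:ℝ)+1) := Real.rpow_lt_rpow_left_iff one_lt_two |>.2 h2
        _ = 2*(2:ℝ)^k := by rw [Real.rpow_add two_pos, Real.rpow_one, Real.rpow_intCast]; ring
    have hk1 : (2:ℝ)^k * (-x) ≤ 2*π := by
      rw [le_div_iff₀ hnx] at e1; linarith
    have hk2 : π < (2:ℝ)^k * (-x) := by
      rw [div_lt_iff₀ hnx] at e2; linarith
    constructor <;> [nlinarith; nlinarith]

lemma zpow_E_unique {x : ℝ} (hx : x ∈ E) {m : ℤ} (hm : (2:ℝ)^m * x ∈ E) : m = 0 := by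
  by_contra hne
  have hπ := pi_pos
  rcases lt_or_gt_of_ne hne with hlt | hgt
  · -- m ≤ -1, so 2^m ≤ 1/2
    have hmle : m ≤ -1 := by omega
    have h2m : (2:ℝ)^m ≤ 1/2 := by
      calc (2:ℝ)^m ≤ (2:ℝ)^(-1:ℤ) := zpow_le_zpow_right₀ one_le_two hmle
        _ = 1/2 := by norm_num
    have h2mpos : (0:ℝ) < (2:ℝ)^m := by positivity
    rcases hx with ⟨hx1, hx2⟩ | ⟨hx1, hx2⟩
    · -- x ∈ [-2π,-π)
      have key : -π ≤ (2:ℝ)^m * x := by nlinarith [mul_nonpos_of_nonneg_of_nonpos (sub_nonneg.2 h2m) (by linarith : x ≤ 0)]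
      have hneg : (2:ℝ)^m * x < 0 := mul_neg_of_pos_of_neg h2mpos (by linarith)
      rcases hm with ⟨_, hm2⟩ | ⟨hm1, _⟩ <;> nlinarith
    · have key : (2:ℝ)^m * x < π := by nlinarith [mul_le_mul_of_nonneg_right h2m (by linarith : (0:ℝ) ≤ x)]
      have hpos : 0 < (2:ℝ)^m * x := mul_pos h2mpos (by linarith)
      rcases hm with ⟨_, hm2⟩ | ⟨hm1, _⟩ <;> nlinarith
  · have hmge : (1:ℤ) ≤ m := by omega
    have h2m : (2:ℝ) ≤ (2:ℝ)^m := by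
      calc (2:ℝ) = (2:ℝ)^(1:ℤ) := by norm_num
        _ ≤ (2:ℝ)^m := zpow_le_zpow_right₀ one_le_two hmge
    rcases hx with ⟨hx1, hx2⟩ | ⟨hx1, hx2⟩
    · have key : (2:ℝ)^m * x ≤ 2*x := by nlinarith [mul_le_mul_of_nonpos_right h2m (by linarith : x ≤ 0)]
      rcases hm with ⟨hm1, _⟩ | ⟨hm1, _⟩ <;> nlinarith
    · have key : 2*x ≤ (2:ℝ)^m * x := by nlinarith [mul_le_mul_of_nonneg_right h2m (by linarith : (0:ℝ) ≤ x)]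
      rcases hm with ⟨_, hm2⟩ | ⟨_, hm2⟩ <;> nlinarith

lemma delta_eq_self {x : ℝ} (hx : x ∈ E) : delta x = x := by
  obtain ⟨k, hk⟩ := delta_eq_zpow x
  have hmem : (2:ℝ)^k * x ∈ E := hk ▸ delta_mem_E (E_ne_zero hx)
  have := zpow_E_unique hx hmem
  rw [hk, this]; simp

lemma delta_dilate {x : ℝ} (hx : x ≠ 0) (m : ℤ) : delta ((2:ℝ)^m * x) = delta x := by
  obtain ⟨k, hk⟩ := delta_eq_zpow x
  obtain ⟨l, hl⟩ := delta_eq_zpow ((2:ℝ)^m * x)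
  have h2 : (2:ℝ) ≠ 0 := by norm_num
  have hdx : delta x ∈ E := delta_mem_E hx
  have hmx : (2:ℝ)^m * x ≠ 0 := mul_ne_zero (zpow_ne_zero m h2) hx
  have hdE : delta ((2:ℝ)^m * x) ∈ E := delta_mem_E hmx
  have key : delta ((2:ℝ)^m * x) = (2:ℝ)^(l + m - k) * delta x := by
    rw [hl, hk, ← mul_assoc, ← mul_assoc, ← zpow_add₀ h2, ← zpow_add₀ h2]
    ring_nf
  have h0 : l + m - k = 0 := zpow_E_unique hdx (key ▸ hdE)
  rw [key, h0]; simp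

lemma tau_eq_sub (x : ℝ) : ∃ m : ℤ, tau x = x - 2*π*m := by
  unfold tau; split
  · exact ⟨⌊x/(2*π)⌋ + 1, by push_cast; ring⟩
  · exact ⟨⌊x/(2*π)⌋, rfl⟩

lemma frac_bounds (x : ℝ) :
    0 ≤ x - 2*π*(⌊x/(2*π)⌋:ℝ) ∧ x - 2*π*(⌊x/(2*π)⌋:ℝ) < 2*π := by
  have h2π : (0:ℝ) < 2*π := by positivity
  have h1 : (⌊x/(2*π)⌋:ℝ) ≤ x/(2*π) := Int.floor_le _
  have h2 : x/(2*π) < ⌊x/(2*π)⌋ + 1 := Int.lt_floor_add_one _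
  constructor
  · have := mul_le_mul_of_nonneg_left h1 h2π.le
    rw [mul_div_cancel₀ _ h2π.ne'] at this
    linarith
  · have := mul_lt_mul_of_pos_left h2 h2π
    rw [mul_div_cancel₀ _ h2π.ne'] at this
    linarith

lemma tau_mem_E (x : ℝ) : tau x ∈ E := by
  obtain ⟨hr0, hr2⟩ := frac_bounds x
  unfold tau; split
  · left; constructor <;> [linarith; linarith]
  · right
    constructor
    · linarith [not_lt.1 (by assumption : ¬ x - 2*π*(⌊x/(2*π)⌋:ℝ) < π)]
    · exact hr2

lemma tau_add_int (x : ℝ) (m : ℤ) : tau (x + 2*π*m) = tau x := by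
  have h2π : (0:ℝ) < 2*π := by positivity
  have hfl : ⌊(x + 2*π*m)/(2*π)⌋ = ⌊x/(2*π)⌋ + m := by
    rw [show (x + 2*π*m)/(2*π) = x/(2*π) + m by field_simp]
    exact Int.floor_add_intCast _ _
  have hval : x + 2*π*m - 2*π*(⌊(x + 2*π*m)/(2*π)⌋:ℝ) = x - 2*π*(⌊x/(2*π)⌋:ℝ) := by
    rw [hfl]; push_cast; ring
  unfold tau
  rw [hval]

lemma tau_eq_self {x : ℝ} (hx : x ∈ E) : tau x = x := by
  have h2π : (0:ℝ) < 2*π := by positivity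
  rcases hx with ⟨h1, h2⟩ | ⟨h1, h2⟩
  · have hfl : ⌊x/(2*π)⌋ = -1 := by
      rw [Int.floor_eq_iff]
      constructor
      · rw [le_div_iff₀ h2π]; push_cast; linarith
      · rw [div_lt_iff₀ h2π]; push_cast; linarith
    unfold tau
    rw [hfl]
    push_cast
    rw [if_pos (by linarith)]
    ring
  · have hfl : ⌊x/(2*π)⌋ = 0 := by
      rw [Int.floor_eq_iff]
      constructor
      · push_cast
        exact div_nonneg (by linarith) h2π.le
      · rw [div_lt_iff₀ h2π]; push_cast; linarith
    unfold tau
    rw [hfl]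
    push_cast
    rw [if_neg (by push_neg; linarith)]
    ring

lemma tau_fract (x : ℝ) : Int.fract (tau x / (2*π)) = Int.fract (x / (2*π)) := by
  have h2π : (0:ℝ) < 2*π := by positivity
  obtain ⟨m, hm⟩ := tau_eq_sub x
  have : (x - 2*π*m)/(2*π) = x/(2*π) - m := by field_simp
  rw [hm, this, Int.fract_sub_intCast]

lemma xiMap_eq_fract {x : ℝ} (hx : x ∈ E) : xiMap x = Int.fract (x/(2*π)) := by
  have h2π : (0:ℝ) < 2*π := by positivity
  rcases hx with ⟨h1, h2⟩ | ⟨h1, h2⟩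
  · have hneg : x < 0 := by linarith [pi_pos]
    have hfl : ⌊x/(2*π)⌋ = -1 := by
      rw [Int.floor_eq_iff]
      constructor
      · rw [le_div_iff₀ h2π]; push_cast; linarith
      · rw [div_lt_iff₀ h2π]; push_cast; linarith
    rw [xiMap, if_pos hneg, Int.fract, hfl]
    push_cast; ring
  · have hpos : 0 < x := lt_of_lt_of_le pi_pos h1
    have hfl : ⌊x/(2*π)⌋ = 0 := by
      rw [Int.floor_eq_iff]
      exact ⟨by push_cast; exact div_nonneg (by linarith) h2π.le,
        by rw [div_lt_iff₀ h2π]; push_cast; linarith⟩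
    rw [xiMap, if_neg (not_lt.2 hpos.le), Int.fract, hfl]
    push_cast; ring

lemma xiMap_mem {x : ℝ} (hx : x ∈ E) : xiMap x ∈ Ico (0:ℝ) 1 := by
  rw [xiMap_eq_fract hx]
  exact ⟨Int.fract_nonneg _, Int.fract_lt_one _⟩

lemma xiInv_mem {t : ℝ} (ht : t ∈ Ico (0:ℝ) 1) : xiInv t ∈ E := by
  have hπ := pi_pos
  obtain ⟨h0, h1⟩ := ht
  rw [xiInv]; split
  · left; constructor <;> nlinarith
  · right
    have : (1:ℝ)/2 ≤ t := not_lt.1 (by assumption)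
    constructor <;> nlinarith

lemma xiMap_xiInv {t : ℝ} (ht : t ∈ Ico (0:ℝ) 1) : xiMap (xiInv t) = t := by
  have hπ := pi_pos
  obtain ⟨h0, h1⟩ := ht
  rw [xiInv]; split
  · have hlt : (2:ℝ)*π*(t-1) < 0 := by nlinarith
    rw [xiMap, if_pos hlt]
    field_simp
    ring
  · have hge : (1:ℝ)/2 ≤ t := not_lt.1 (by assumption)
    have hge' : ¬ (2:ℝ)*π*t < 0 := by push_neg; positivity
    rw [xiMap, if_neg hge']
    field_simp

lemma xiInv_xiMap {x : ℝ} (hx : x ∈ E) : xiInv (xiMap x) = x := by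
  have hπ := pi_pos
  have h2π : (0:ℝ) < 2*π := by positivity
  rcases hx with ⟨h1, h2⟩ | ⟨h1, h2⟩
  · have hneg : x < 0 := by linarith
    rw [xiMap, if_pos hneg, xiInv, if_pos (by
      have : x/(2*π) < -(1/2) := by rw [div_lt_iff₀ h2π]; linarith
      linarith)]
    field_simp
    ring
  · have hpos : 0 < x := lt_of_lt_of_le pi_pos h1
    rw [xiMap, if_neg (not_lt.2 hpos.le), xiInv,
      if_neg (by push_neg; rw [le_div_iff₀ h2π]; linarith)]
    field_simp

lemma W_zero_not_mem {W : Set ℝ} (hD : DilPartition W) : (0:ℝ) ∉ W := by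
  intro h0
  have h1 : (0:ℝ) ∈ (fun x : ℝ => (2:ℝ)^(0:ℤ) * x) '' W := ⟨0, h0, by simp⟩
  have h2 : (0:ℝ) ∈ (fun x : ℝ => (2:ℝ)^(1:ℤ) * x) '' W := ⟨0, h0, by simp⟩
  exact Set.disjoint_left.1 (hD.2 (by norm_num : (0:ℤ) ≠ 1)) h1 h2

lemma delta_injOn {W : Set ℝ} (hD : DilPartition W) {w1 w2 : ℝ} (h1 : w1 ∈ W) (h2 : w2 ∈ W)
    (he : delta w1 = delta w2) : w1 = w2 := by
  obtain ⟨k1, hk1⟩ := delta_eq_zpow w1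
  obtain ⟨k2, hk2⟩ := delta_eq_zpow w2
  by_cases hkk : k1 = k2
  · have : (2:ℝ)^k1 * w1 = (2:ℝ)^k1 * w2 := by rw [← hk1, he, hk2, hkk]
    exact mul_left_cancel₀ (zpow_ne_zero k1 (by norm_num)) this
  · exfalso
    have m1 : delta w1 ∈ (fun x : ℝ => (2:ℝ)^k1 * x) '' W := ⟨w1, h1, hk1.symm⟩
    have m2 : delta w1 ∈ (fun x : ℝ => (2:ℝ)^k2 * x) '' W := ⟨w2, h2, by rw [he, hk2]⟩
    exact Set.disjoint_left.1 (hD.2 hkk) m1 m2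

lemma delta_surjOn {W : Set ℝ} (hD : DilPartition W) {x : ℝ} (hx : x ∈ E) :
    ∃ w ∈ W, delta w = x := by
  have hx0 : x ≠ 0 := E_ne_zero hx
  have hxm : x ∈ ⋃ k : ℤ, (fun y : ℝ => (2:ℝ)^k * y) '' W := by rw [hD.1]; exact hx0
  simp only [Set.mem_iUnion] at hxm
  obtain ⟨k, w, hw, hkw⟩ := hxm
  have hwx : w = (2:ℝ)^(-k) * x := by
    rw [← hkw, ← mul_assoc, ← zpow_add₀ (by norm_num : (2:ℝ) ≠ 0), neg_add_cancel,
      zpow_zero, one_mul]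
  exact ⟨w, hw, by rw [hwx, delta_dilate hx0, delta_eq_self hx]⟩

lemma tau_injOn {W : Set ℝ} (hT : TransPartition W) {w1 w2 : ℝ} (h1 : w1 ∈ W) (h2 : w2 ∈ W)
    (he : tau w1 = tau w2) : w1 = w2 := by
  obtain ⟨m1, hm1⟩ := tau_eq_sub w1
  obtain ⟨m2, hm2⟩ := tau_eq_sub w2
  by_cases hmm : m1 = m2
  · have : w1 - 2*π*m1 = w2 - 2*π*m1 := by rw [← hm1, he, hm2, hmm]
    linarith
  · exfalso
    have hne : (-m1 : ℤ) ≠ -m2 := by omega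
    have k1 : tau w1 ∈ (fun x:ℝ => x + 2*π*((-m1 : ℤ):ℝ)) '' W :=
      ⟨w1, h1, by push_cast; rw [hm1]; ring⟩
    have k2 : tau w1 ∈ (fun x:ℝ => x + 2*π*((-m2 : ℤ):ℝ)) '' W :=
      ⟨w2, h2, by push_cast; rw [he, hm2]; ring⟩
    exact Set.disjoint_left.1 (hT.2 hne) k1 k2

lemma tau_surjOn {W : Set ℝ} (hT : TransPartition W) {x : ℝ} (hx : x ∈ E) :
    ∃ w ∈ W, tau w = x := by
  have hxm : x ∈ ⋃ k : ℤ, (fun y : ℝ => y + 2*π*(k:ℝ)) '' W := by rw [hT.1]; trivial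
  simp only [Set.mem_iUnion] at hxm
  obtain ⟨k, w, hw, hkw⟩ := hxm
  refine ⟨w, hw, ?_⟩
  have hwx : w = x + 2*π*((-k:ℤ):ℝ) := by push_cast; simp only at hkw; linarith
  rw [hwx, tau_add_int, tau_eq_self hx]

lemma hIso_spec {W : Set ℝ} (h : IsRegularizedWaveletSet W) {t : ℝ} (ht : t ∈ Ico (0:ℝ) 1) :
    Function.invFunOn delta W (xiInv t) ∈ W ∧
      delta (Function.invFunOn delta W (xiInv t)) = xiInv t := by
  obtain ⟨w, hw, hdw⟩ := delta_surjOn h.2.2 (xiInv_mem ht)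
  exact ⟨Function.invFunOn_mem ⟨w, hw, hdw⟩, Function.invFunOn_eq ⟨w, hw, hdw⟩⟩

lemma hIso_eq {W : Set ℝ} (h : IsRegularizedWaveletSet W) {t w : ℝ} (ht : t ∈ Ico (0:ℝ) 1)
    (hw : w ∈ W) (hdw : delta w = xiInv t) :
    hIso W t = Int.fract (w/(2*π)) := by
  obtain ⟨hmem, heq⟩ := hIso_spec h ht
  have hinv : Function.invFunOn delta W (xiInv t) = w :=
    delta_injOn h.2.2 hmem hw (by rw [heq, hdw])
  rw [hIso, hinv, xiMap_eq_fract (tau_mem_E w), tau_fract]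

def auxA (W : Set ℝ) (j : ℤ) : Set ℝ := Ico (1/2:ℝ) 1 ∩ (fun t => (2:ℝ)^j * (2*π*t)) ⁻¹' W

def auxB (W : Set ℝ) (j : ℤ) : Set ℝ := Ico (0:ℝ) (1/2) ∩ (fun t => (2:ℝ)^j * (2*π*(t-1))) ⁻¹' W

lemma auxA_value {W : Set ℝ} (h : IsRegularizedWaveletSet W) (j : ℤ) {t : ℝ} (htA : t ∈ auxA W j) :
    hIso W t = Int.fract ((2:ℝ)^j * t) := by
  obtain ⟨ht12, htW⟩ := htA
  have ht : t ∈ Ico (0:ℝ) 1 := ⟨by linarith [ht12.1], ht12.2⟩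
  have hxi : xiInv t = 2*π*t := by rw [xiInv, if_neg (not_lt.2 ht12.1)]
  have hE : (2*π*t : ℝ) ∈ E := hxi ▸ xiInv_mem ht
  have h0 : (2*π*t : ℝ) ≠ 0 := E_ne_zero hE
  have hd : delta ((2:ℝ)^j * (2*π*t)) = xiInv t := by
    rw [delta_dilate h0 j, delta_eq_self hE, hxi]
  rw [hIso_eq h ht htW hd]
  congr 1
  have h2π : (2:ℝ)*π ≠ 0 := by positivity
  field_simp

lemma auxB_value {W : Set ℝ} (h : IsRegularizedWaveletSet W) (j : ℤ) {t : ℝ} (htB : t ∈ auxB W j) :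
    hIso W t = Int.fract ((2:ℝ)^j * (t - 1)) := by
  obtain ⟨ht12, htW⟩ := htB
  have ht : t ∈ Ico (0:ℝ) 1 := ⟨ht12.1, by linarith [ht12.2]⟩
  have hxi : xiInv t = 2*π*(t-1) := by rw [xiInv, if_pos ht12.2]
  have hE : (2*π*(t-1) : ℝ) ∈ E := hxi ▸ xiInv_mem ht
  have h0 : (2*π*(t-1) : ℝ) ≠ 0 := E_ne_zero hE
  have hd : delta ((2:ℝ)^j * (2*π*(t-1))) = xiInv t := by
    rw [delta_dilate h0 j, delta_eq_self hE, hxi]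
  rw [hIso_eq h ht htW hd]
  congr 1
  have h2π : (2:ℝ)*π ≠ 0 := by positivity
  field_simp

lemma auxA_cover {W : Set ℝ} (h : IsRegularizedWaveletSet W) :
    (⋃ j : ℤ, auxA W j) = Ico (1/2:ℝ) 1 := by
  apply Set.Subset.antisymm
  · exact Set.iUnion_subset fun j => Set.inter_subset_left
  · intro t ht12
    have ht : t ∈ Ico (0:ℝ) 1 := ⟨by linarith [ht12.1], ht12.2⟩
    have hxi : xiInv t = 2*π*t := by rw [xiInv, if_neg (not_lt.2 ht12.1)]
    have hE : (2*π*t : ℝ) ∈ E := hxi ▸ xiInv_mem ht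
    obtain ⟨w, hw, hdw⟩ := delta_surjOn h.2.2 hE
    obtain ⟨k, hk⟩ := delta_eq_zpow w
    have hwx : w = (2:ℝ)^(-k) * (2*π*t) := by
      rw [← show (2:ℝ)^k * w = 2*π*t from hk ▸ hdw, ← mul_assoc,
        ← zpow_add₀ (by norm_num : (2:ℝ) ≠ 0), neg_add_cancel, zpow_zero, one_mul]
    exact Set.mem_iUnion.2 ⟨-k, ht12, show (2:ℝ)^(-k) * (2*π*t) ∈ W from hwx ▸ hw⟩

lemma auxB_cover {W : Set ℝ} (h : IsRegularizedWaveletSet W) :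
    (⋃ j : ℤ, auxB W j) = Ico (0:ℝ) (1/2) := by
  apply Set.Subset.antisymm
  · exact Set.iUnion_subset fun j => Set.inter_subset_left
  · intro t ht12
    have ht : t ∈ Ico (0:ℝ) 1 := ⟨ht12.1, by linarith [ht12.2]⟩
    have hxi : xiInv t = 2*π*(t-1) := by rw [xiInv, if_pos ht12.2]
    have hE : (2*π*(t-1) : ℝ) ∈ E := hxi ▸ xiInv_mem ht
    obtain ⟨w, hw, hdw⟩ := delta_surjOn h.2.2 hE
    obtain ⟨k, hk⟩ := delta_eq_zpow w
    have hwx : w = (2:ℝ)^(-k) * (2*π*(t-1)) := by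
      rw [← show (2:ℝ)^k * w = 2*π*(t-1) from hk ▸ hdw, ← mul_assoc,
        ← zpow_add₀ (by norm_num : (2:ℝ) ≠ 0), neg_add_cancel, zpow_zero, one_mul]
    exact Set.mem_iUnion.2 ⟨-k, ht12, show (2:ℝ)^(-k) * (2*π*(t-1)) ∈ W from hwx ▸ hw⟩

lemma auxA_disj {W : Set ℝ} (h : IsRegularizedWaveletSet W) :
    Pairwise (Function.onFun Disjoint (auxA W)) := by
  intro j l hjl
  rw [Function.onFun, Set.disjoint_left]
  rintro t ⟨ht12, hjW⟩ ⟨-, hlW⟩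
  have ht : t ∈ Ico (0:ℝ) 1 := ⟨by linarith [ht12.1], ht12.2⟩
  have hxi : xiInv t = 2*π*t := by rw [xiInv, if_neg (not_lt.2 ht12.1)]
  have hE : (2*π*t : ℝ) ∈ E := hxi ▸ xiInv_mem ht
  have h0 : (2*π*t : ℝ) ≠ 0 := E_ne_zero hE
  have hd : ∀ m : ℤ, delta ((2:ℝ)^m * (2*π*t)) = 2*π*t := fun m => by
    rw [delta_dilate h0 m, delta_eq_self hE]
  have heq : (2:ℝ)^j * (2*π*t) = (2:ℝ)^l * (2*π*t) :=
    delta_injOn h.2.2 hjW hlW (by rw [hd j, hd l])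
  exact hjl (zpow_right_injective₀ two_pos (by norm_num) (mul_right_cancel₀ h0 heq))

lemma auxB_disj {W : Set ℝ} (h : IsRegularizedWaveletSet W) :
    Pairwise (Function.onFun Disjoint (auxB W)) := by
  intro j l hjl
  rw [Function.onFun, Set.disjoint_left]
  rintro t ⟨ht12, hjW⟩ ⟨-, hlW⟩
  have ht : t ∈ Ico (0:ℝ) 1 := ⟨ht12.1, by linarith [ht12.2]⟩
  have hxi : xiInv t = 2*π*(t-1) := by rw [xiInv, if_pos ht12.2]
  have hE : (2*π*(t-1) : ℝ) ∈ E := hxi ▸ xiInv_mem ht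
  have h0 : (2*π*(t-1) : ℝ) ≠ 0 := E_ne_zero hE
  have hd : ∀ m : ℤ, delta ((2:ℝ)^m * (2*π*(t-1))) = 2*π*(t-1) := fun m => by
    rw [delta_dilate h0 m, delta_eq_self hE]
  have heq : (2:ℝ)^j * (2*π*(t-1)) = (2:ℝ)^l * (2*π*(t-1)) :=
    delta_injOn h.2.2 hjW hlW (by rw [hd j, hd l])
  exact hjl (zpow_right_injective₀ two_pos (by norm_num) (mul_right_cancel₀ h0 heq))

lemma auxA_meas {W : Set ℝ} (hW : MeasurableSet W) (j : ℤ) : MeasurableSet (auxA W j) :=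
  measurableSet_Ico.inter (((measurable_id.const_mul (2*π)).const_mul ((2:ℝ)^j)) hW)

lemma auxB_meas {W : Set ℝ} (hW : MeasurableSet W) (j : ℤ) : MeasurableSet (auxB W j) :=
  measurableSet_Ico.inter ((((measurable_id.sub_const 1).const_mul (2*π)).const_mul ((2:ℝ)^j)) hW)

def auxF : Option (ℤ ⊕ ℤ) → ℝ → ℝ
  | none => fun _ => 0
  | some (Sum.inl j) => fun t => Int.fract ((2:ℝ)^j * t)
  | some (Sum.inr j) => fun t => Int.fract ((2:ℝ)^j * (t-1))

def auxC (W : Set ℝ) : Option (ℤ ⊕ ℤ) → Set ℝ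
  | none => (Ico (0:ℝ) 1)ᶜ
  | some (Sum.inl j) => auxA W j
  | some (Sum.inr j) => auxB W j

lemma auxF_meas (o : Option (ℤ ⊕ ℤ)) : Measurable (auxF o) := by
  rcases o with _ | j | j
  · exact measurable_const
  · exact (measurable_id.const_mul ((2:ℝ)^j)).fract
  · exact ((measurable_id.sub_const 1).const_mul ((2:ℝ)^j)).fract

lemma auxC_meas {W : Set ℝ} (hW : MeasurableSet W) (o : Option (ℤ ⊕ ℤ)) :
    MeasurableSet (auxC W o) := by
  rcases o with _ | j | j
  · exact measurableSet_Ico.compl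
  · exact auxA_meas hW j
  · exact auxB_meas hW j

lemma auxC_cover {W : Set ℝ} (h : IsRegularizedWaveletSet W) (t : ℝ) :
    ∃ n : ℕ, t ∈ auxC W ((Denumerable.eqv (Option (ℤ ⊕ ℤ))).symm n) := by
  by_cases ht : t ∈ Ico (0:ℝ) 1
  · rcases lt_or_ge t (1/2) with h12 | h12
    · have : t ∈ ⋃ j : ℤ, auxB W j := (auxB_cover h).symm ▸ (⟨ht.1, h12⟩ : t ∈ Ico (0:ℝ) (1/2))
      obtain ⟨j, hj⟩ := Set.mem_iUnion.1 this
      exact ⟨Denumerable.eqv (Option (ℤ ⊕ ℤ)) (some (Sum.inr j)), by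
        rw [Equiv.symm_apply_apply]; exact hj⟩
    · have : t ∈ ⋃ j : ℤ, auxA W j := (auxA_cover h).symm ▸ (⟨h12, ht.2⟩ : t ∈ Ico (1/2:ℝ) 1)
      obtain ⟨j, hj⟩ := Set.mem_iUnion.1 this
      exact ⟨Denumerable.eqv (Option (ℤ ⊕ ℤ)) (some (Sum.inl j)), by
        rw [Equiv.symm_apply_apply]; exact hj⟩
  · exact ⟨Denumerable.eqv (Option (ℤ ⊕ ℤ)) none, by
      rw [Equiv.symm_apply_apply]; exact ht⟩

lemma hIso_measurable_restrict {W : Set ℝ} (h : IsRegularizedWaveletSet W) :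
    Measurable ((Ico (0:ℝ) 1).restrict (hIso W)) := by
  classical
  set e := (Denumerable.eqv (Option (ℤ ⊕ ℤ))).symm with he
  have hG : Measurable fun t : ℝ => auxF (e (Nat.find (auxC_cover h t))) t :=
    Measurable.find (f := fun n => auxF (e n)) (p := fun n t => t ∈ auxC W (e n))
      (fun n => auxF_meas (e n)) (fun n => by simpa using auxC_meas h.1 (e n)) (auxC_cover h)
  have hagree : ∀ t ∈ Ico (0:ℝ) 1, hIso W t = auxF (e (Nat.find (auxC_cover h t))) t := by
    intro t ht
    have hmem : t ∈ auxC W (e (Nat.find (auxC_cover h t))) := Nat.find_spec (auxC_cover h t)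
    set o := e (Nat.find (auxC_cover h t)) with ho
    clear_value o
    rcases o with _ | j | j
    · exact absurd ht hmem
    · exact auxA_value h j hmem
    · exact auxB_value h j hmem
  have : (Ico (0:ℝ) 1).restrict (hIso W) =
      (Ico (0:ℝ) 1).restrict (fun t => auxF (e (Nat.find (auxC_cover h t))) t) :=
    funext fun x => hagree x x.2
  rw [this]
  exact hG.comp measurable_subtype_coe

/-- For every regularized wavelet set `W`, the map `h̃_W` is a measurable
bijection of `[0,1)` given on measurable partitions `{A_k}` of `[1/2,1)` and `{B_k}` of
`[0,1/2)` by `frac(2^k x)` resp. `frac(2^k (x-1))`. -/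
theorem hIso_isWaveletInduced (W : Set ℝ) (h : IsRegularizedWaveletSet W) :
    IsWaveletInduced (hIso W) := by
  refine ⟨⟨?_, ?_, ?_⟩, hIso_measurable_restrict h, auxA W, auxB W,
    auxA_meas h.1, auxB_meas h.1, auxA_cover h, auxA_disj h, auxB_cover h, auxB_disj h,
    fun j t htA => auxA_value h j htA, fun j t htB => auxB_value h j htB⟩
  · -- MapsTo
    intro t ht
    exact xiMap_mem (tau_mem_E _)
  · -- InjOn
    intro t1 ht1 t2 ht2 he
    obtain ⟨hm1, he1⟩ := hIso_spec h ht1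
    obtain ⟨hm2, he2⟩ := hIso_spec h ht2
    have htau : tau (Function.invFunOn delta W (xiInv t1)) =
        tau (Function.invFunOn delta W (xiInv t2)) := by
      have hcong := congrArg xiInv he
      rwa [hIso, hIso, xiInv_xiMap (tau_mem_E _), xiInv_xiMap (tau_mem_E _)] at hcong
    have hww := tau_injOn h.2.1 hm1 hm2 htau
    have hxx : xiInv t1 = xiInv t2 := by rw [← he1, ← he2, hww]
    calc t1 = xiMap (xiInv t1) := (xiMap_xiInv ht1).symm
      _ = xiMap (xiInv t2) := by rw [hxx]
      _ = t2 := xiMap_xiInv ht2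
  · -- SurjOn
    intro s hs
    obtain ⟨w, hw, htw⟩ := tau_surjOn h.2.1 (xiInv_mem hs)
    have hw0 : w ≠ 0 := fun h0 => W_zero_not_mem h.2.2 (h0 ▸ hw)
    have hdE : delta w ∈ E := delta_mem_E hw0
    refine ⟨xiMap (delta w), xiMap_mem hdE, ?_⟩
    have hx : xiInv (xiMap (delta w)) = delta w := xiInv_xiMap hdE
    obtain ⟨hmem, heq⟩ := hIso_spec h (xiMap_mem hdE)
    have hww : Function.invFunOn delta W (xiInv (xiMap (delta w))) = w :=
      delta_injOn h.2.2 hmem hw (by rw [heq, hx])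
    show hIso W (xiMap (delta w)) = s
    rw [hIso, hww, htw, xiMap_xiInv hs]


end
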